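/- There exists a unique function θ : ℝ → ℝ, defined on all of ℝ, with θ(0) = θ₀ and θ'(s) = f(θ(s)) for all s ∈ ℝ. This solution is bounded and monotone; more precisely: if f(θ₀) = 0 then θ is the constant function θ₀; if f(θ₀) > 0 then θ is strictly increasing; and if f(θ₀) < 0 then θ is strictly decreasing. -/

import Mathlib

open Real Set intervalIntegral MeasureTheory

set_option maxHeartbeats 1000000

theorem lipOn {f f' : ℝ → ℝ} (hd : ∀ x, HasDerivAt f (f' x) x) (hc : Continuous f')
    (c d : ℝ) : ∃ K : NNReal, LipschitzOnWith K f (Icc c d) := by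
  obtain ⟨M, hM⟩ := (isCompact_Icc (a := c) (b := d)).exists_bound_of_continuousOn
    (hc.continuousOn (s := Icc c d))
  refine ⟨M.toNNReal, Convex.lipschitzOnWith_of_nnnorm_deriv_le
    (fun x _ => (hd x).differentiableAt) (fun x hx => ?_) (convex_Icc c d)⟩
  have h1 : deriv f x = f' x := (hd x).deriv
  rw [← NNReal.coe_le_coe, coe_nnnorm, h1, Real.norm_eq_abs, Real.coe_toNNReal']
  exact le_max_of_le_left (hM x hx)

theorem const_of_hits {f f' : ℝ → ℝ} (hd : ∀ x, HasDerivAt f (f' x) x) (hc : Continuous f')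
    {θ : ℝ → ℝ} (hθ : ∀ s, HasDerivAt θ (f (θ s)) s) {c : ℝ} (hfc : f c = 0)
    {s₀ : ℝ} (h0 : θ s₀ = c) : ∀ s, θ s = c := by
  obtain ⟨K, hK⟩ := lipOn hd hc (c - 1) (c + 1)
  have hθcont : Continuous θ := by
    exact continuous_iff_continuousAt.2 fun s => (hθ s).continuousAt
  have hclosed : IsClosed {s | θ s = c} := isClosed_eq hθcont continuous_const
  have hopen : IsOpen {s | θ s = c} := by
    rw [isOpen_iff_mem_nhds]
    intro s₁ hs₁
    have hmem : {s | θ s ∈ Ioo (c - 1) (c + 1)} ∈ nhds s₁ := by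
      apply hθcont.continuousAt.preimage_mem_nhds
      rw [show θ s₁ = c from hs₁]
      exact Ioo_mem_nhds (by linarith) (by linarith)
    obtain ⟨l, u, hlu, hsub⟩ := mem_nhds_iff_exists_Ioo_subset.1 hmem
    have heq : EqOn θ (fun _ => c) (Ioo l u) := by
      apply ODE_solution_unique_of_mem_Ioo (v := fun _ x => f x)
        (s := fun _ => Icc (c - 1) (c + 1)) (K := K) (fun _ _ => hK) hlu
        (fun t ht => ⟨hθ t, Ioo_subset_Icc_self (hsub ht)⟩)
        (fun t _ => ⟨by simpa [hfc] using hasDerivAt_const t c,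
          by constructor <;> simp ⟩)
      simpa using hs₁
    filter_upwards [Ioo_mem_nhds hlu.1 hlu.2] with t ht using heq ht
  intro s
  have huniv : {s | θ s = c} = univ :=
    IsClopen.eq_univ ⟨hclosed, hopen⟩ ⟨s₀, h0⟩
  have : s ∈ {s | θ s = c} := huniv ▸ mem_univ s
  exact this

-- trapped above a zero
theorem trap_above {f f' : ℝ → ℝ} (hd : ∀ x, HasDerivAt f (f' x) x) (hc : Continuous f')
    {θ : ℝ → ℝ} (hθ : ∀ s, HasDerivAt θ (f (θ s)) s) {a : ℝ} (hfa : f a = 0)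
    (h0 : a < θ 0) : ∀ s, a < θ s := by
  intro s
  by_contra h
  push_neg at h
  have hne : ∀ t, θ t ≠ a := by
    intro t ht
    have := const_of_hits hd hc hθ hfa ht 0
    linarith
  rcases h.lt_or_eq with h | h
  · -- IVT between s and 0
    have hθcont : Continuous θ := continuous_iff_continuousAt.2 fun s => (hθ s).continuousAt
    have : a ∈ θ '' uIcc s 0 := by
      apply intermediate_value_uIcc (hθcont.continuousOn)
      exact ⟨inf_le_of_left_le h.le, le_sup_of_le_right h0.le⟩
    obtain ⟨t, _, ht⟩ := this
    exact hne t ht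
  · exact hne s h

theorem trap_below {f f' : ℝ → ℝ} (hd : ∀ x, HasDerivAt f (f' x) x) (hc : Continuous f')
    {θ : ℝ → ℝ} (hθ : ∀ s, HasDerivAt θ (f (θ s)) s) {b : ℝ} (hfb : f b = 0)
    (h0 : θ 0 < b) : ∀ s, θ s < b := by
  intro s
  by_contra h
  push_neg at h
  have hne : ∀ t, θ t ≠ b := by
    intro t ht
    have := const_of_hits hd hc hθ hfb ht 0
    linarith
  rcases h.lt_or_eq with h | h
  · have hθcont : Continuous θ := continuous_iff_continuousAt.2 fun s => (hθ s).continuousAt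
    have : b ∈ θ '' uIcc 0 s := by
      apply intermediate_value_uIcc (hθcont.continuousOn)
      exact ⟨inf_le_of_left_le h0.le, le_sup_of_le_right h.le⟩
    obtain ⟨t, _, ht⟩ := this
    exact hne t ht
  · exact hne s (h.symm)

-- uniqueness of trapped solutions
theorem sol_unique {f f' : ℝ → ℝ} (hd : ∀ x, HasDerivAt f (f' x) x) (hc : Continuous f')
    {θ₁ θ₂ : ℝ → ℝ} (hθ₁ : ∀ s, HasDerivAt θ₁ (f (θ₁ s)) s)
    (hθ₂ : ∀ s, HasDerivAt θ₂ (f (θ₂ s)) s) {a b : ℝ}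
    (htrap₁ : ∀ s, θ₁ s ∈ Icc a b) (htrap₂ : ∀ s, θ₂ s ∈ Icc a b)
    (heq : θ₁ 0 = θ₂ 0) : θ₁ = θ₂ := by
  obtain ⟨K, hK⟩ := lipOn hd hc a b
  funext s
  have h1 : s ∈ Ioo (-(|s|+1)) (|s|+1) := by
    constructor <;> cases abs_cases s <;> linarith
  exact ODE_solution_unique_of_mem_Ioo (v := fun _ x => f x) (s := fun _ => Icc a b)
    (K := K) (fun _ _ => hK) (by constructor <;> nlinarith [abs_nonneg s] : (0:ℝ) ∈ Ioo (-(|s|+1)) (|s|+1))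
    (fun t _ => ⟨hθ₁ t, htrap₁ t⟩) (fun t _ => ⟨hθ₂ t, htrap₂ t⟩) heq h1


theorem zero_in {f : ℝ → ℝ} (hcf : Continuous f) {u v : ℝ} (huv : u ≤ v)
    (hs : f u * f v ≤ 0) : ∃ z ∈ Icc u v, f z = 0 := by
  have h0 : (0:ℝ) ∈ Icc (f u ⊓ f v) (f u ⊔ f v) := by
    rcases mul_nonpos_iff.1 hs with ⟨h1, h2⟩ | ⟨h1, h2⟩
    · exact ⟨inf_le_of_right_le h2, le_sup_of_le_left h1⟩
    · exact ⟨inf_le_of_left_le h1, le_sup_of_le_right h2⟩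
  have := intermediate_value_uIcc (f := f) (a := u) (b := v) hcf.continuousOn h0
  obtain ⟨z, hz, hfz⟩ := this
  rw [uIcc_of_le huv] at hz
  exact ⟨z, hz, hfz⟩

theorem zero_above {lam μ θ₀ : ℝ} {f : ℝ → ℝ}
    (hf : ∀ θ : ℝ, f θ = μ * Real.cos θ - (θ - θ₀ + lam) * Real.sin θ)
    (x : ℝ) : ∃ z, x ≤ z ∧ f z = 0 := by
  have hcf : Continuous f := by
    have : f = fun θ : ℝ => μ * Real.cos θ - (θ - θ₀ + lam) * Real.sin θ := funext hf
    rw [this]; fun_prop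
  set n : ℤ := ⌈x / π⌉ with hn
  have hxn : x ≤ n * π := by
    rw [← div_le_iff₀ pi_pos] at *
    exact Int.le_ceil _
  have hfu : f (n * π) = μ * Real.cos (n * π) := by
    rw [hf, Real.sin_int_mul_pi]; ring
  have hfv : f ((n + 1) * π) = -(μ * Real.cos (n * π)) := by
    have h1 : ((n:ℝ) + 1) * π = n * π + π := by ring
    have h2 : ((n:ℝ) + 1) * π = ((n + 1 : ℤ) : ℝ) * π := by push_cast; ring
    rw [hf, h2, Real.sin_int_mul_pi, ← h2, h1, Real.cos_add_pi]; ring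
  have huv : (n:ℝ) * π ≤ ((n:ℝ) + 1) * π := by nlinarith [pi_pos]
  obtain ⟨z, hz, hfz⟩ := zero_in hcf huv (by rw [hfu, hfv]; nlinarith [sq_nonneg (μ * Real.cos (n * π))])
  exact ⟨z, hxn.trans hz.1, hfz⟩

theorem zero_below {lam μ θ₀ : ℝ} {f : ℝ → ℝ}
    (hf : ∀ θ : ℝ, f θ = μ * Real.cos θ - (θ - θ₀ + lam) * Real.sin θ)
    (x : ℝ) : ∃ z, z ≤ x ∧ f z = 0 := by
  have hcf : Continuous f := by
    have : f = fun θ : ℝ => μ * Real.cos θ - (θ - θ₀ + lam) * Real.sin θ := funext hf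
    rw [this]; fun_prop
  set n : ℤ := ⌊x / π⌋ - 1 with hn
  have hxn : ((n:ℝ) + 1) * π ≤ x := by
    have : ((n:ℝ) + 1) = (⌊x / π⌋ : ℝ) := by push_cast [hn]; ring
    rw [this, ← le_div_iff₀ pi_pos]
    exact Int.floor_le _
  have hfu : f (n * π) = μ * Real.cos (n * π) := by
    rw [hf, Real.sin_int_mul_pi]; ring
  have hfv : f ((n + 1) * π) = -(μ * Real.cos (n * π)) := by
    have h1 : ((n:ℝ) + 1) * π = n * π + π := by ring
    have h2 : ((n:ℝ) + 1) * π = ((n + 1 : ℤ) : ℝ) * π := by push_cast; ring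
    rw [hf, h2, Real.sin_int_mul_pi, ← h2, h1, Real.cos_add_pi]; ring
  have huv : (n:ℝ) * π ≤ ((n:ℝ) + 1) * π := by nlinarith [pi_pos]
  obtain ⟨z, hz, hfz⟩ := zero_in hcf huv (by rw [hfu, hfv]; nlinarith [sq_nonneg (μ * Real.cos (n * π))])
  exact ⟨z, hz.2.trans hxn, hfz⟩


theorem exists_sol_pos {f f' : ℝ → ℝ} (hd : ∀ x, HasDerivAt f (f' x) x) (hc : Continuous f')
    {a b θ₀ : ℝ} (hab : a < θ₀) (hb : θ₀ < b) (hfa : f a = 0) (hfb : f b = 0)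
    (hpos : ∀ x ∈ Ioo a b, 0 < f x) :
    ∃ θ : ℝ → ℝ, θ 0 = θ₀ ∧ (∀ s, HasDerivAt θ (f (θ s)) s) ∧ ∀ s, θ s ∈ Ioo a b := by
  have hcf : Continuous f := continuous_iff_continuousAt.2 fun x => (hd x).continuousAt
  obtain ⟨K, hK⟩ := lipOn hd hc a b
  set L : ℝ := (K : ℝ) + 1 with hL
  have hLpos : 0 < L := by positivity
  have hLip : ∀ x ∈ Icc a b, ∀ y ∈ Icc a b, |f x - f y| ≤ L * |x - y| := by
    intro x hx y hy
    have := hK.dist_le_mul x hx y hy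
    rw [Real.dist_eq, Real.dist_eq] at this
    nlinarith [abs_nonneg (x - y), this]
  -- pointwise bounds
  have hub : ∀ x ∈ Ioo a b, f x ≤ L * (b - x) := by
    intro x hx
    have h1 := hLip x (Ioo_subset_Icc_self hx) b ⟨by linarith [hx.1], le_refl b⟩
    rw [hfb, sub_zero] at h1
    have h2 : |x - b| = b - x := by rw [abs_sub_comm]; exact abs_of_nonneg (by linarith [hx.2])
    calc f x ≤ |f x| := le_abs_self _
    _ ≤ L * (b - x) := by rw [← h2]; exact h1
  have hlb : ∀ x ∈ Ioo a b, f x ≤ L * (x - a) := by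
    intro x hx
    have h1 := hLip x (Ioo_subset_Icc_self hx) a ⟨le_refl a, by linarith [hx.2]⟩
    rw [hfa, sub_zero] at h1
    have h2 : |x - a| = x - a := abs_of_nonneg (by linarith [hx.1])
    calc f x ≤ |f x| := le_abs_self _
    _ ≤ L * (x - a) := by rw [← h2]; exact h1
  -- continuity of the integrand
  have hinvc : ContinuousOn (fun t => (f t)⁻¹) (Ioo a b) :=
    (hcf.continuousOn).inv₀ fun t ht => (hpos t ht).ne'
  have hint : ∀ x ∈ Ioo a b, ∀ y ∈ Ioo a b, IntervalIntegrable (fun t => (f t)⁻¹) volume x y := by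
    intro x hx y hy
    apply ContinuousOn.intervalIntegrable
    exact hinvc.mono ((ordConnected_Ioo).uIcc_subset hx hy)
  have hθ₀ : θ₀ ∈ Ioo a b := ⟨hab, hb⟩
  set g : ℝ → ℝ := fun x => ∫ t in θ₀..x, (f t)⁻¹ with hg
  have hgderiv : ∀ x ∈ Ioo a b, HasDerivAt g (f x)⁻¹ x := by
    intro x hx
    apply intervalIntegral.integral_hasDerivAt_right (hint θ₀ hθ₀ x hx)
    · exact AEStronglyMeasurable.stronglyMeasurableAtFilter_of_mem
        (hinvc.aestronglyMeasurable measurableSet_Ioo) (isOpen_Ioo.mem_nhds hx)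
    · exact (hcf.continuousAt).inv₀ (hpos x hx).ne'
  have hgcont : ContinuousOn g (Ioo a b) :=
    fun x hx => ((hgderiv x hx).continuousAt).continuousWithinAt
  have hgmono : StrictMonoOn g (Ioo a b) := by
    apply strictMonoOn_of_deriv_pos (convex_Ioo a b) hgcont
    intro x hx
    rw [interior_Ioo] at hx
    rw [(hgderiv x hx).deriv]
    exact inv_pos.2 (hpos x hx)
  have hgzero : g θ₀ = 0 := intervalIntegral.integral_same
  -- escape to +∞ near b
  have hgub : ∀ x ∈ Ico θ₀ b, L⁻¹ * (Real.log (b - θ₀) - Real.log (b - x)) ≤ g x := by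
    intro x hx
    have hxm : x ∈ Ioo a b := ⟨lt_of_lt_of_le hab hx.1, hx.2⟩
    have hsub : Icc θ₀ x ⊆ Ioo a b := fun t ht => ⟨lt_of_lt_of_le hab ht.1, lt_of_le_of_lt ht.2 hx.2⟩
    have hder : ∀ t ∈ uIcc θ₀ x, HasDerivAt (fun t => -(L⁻¹ * Real.log (b - t))) (L * (b - t))⁻¹ t := by
      intro t ht
      rw [uIcc_of_le hx.1] at ht
      have hbt : 0 < b - t := by linarith [(hsub ht).2]
      have h1 : HasDerivAt (fun t : ℝ => b - t) (-1) t := (hasDerivAt_id t).const_sub b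
      have h2 := (Real.hasDerivAt_log hbt.ne').comp t h1
      have h3 := (h2.const_mul L⁻¹).neg
      exact h3.congr_deriv (by rw [mul_inv]; ring)
    have hint2 : IntervalIntegrable (fun t => (L * (b - t))⁻¹) volume θ₀ x := by
      apply ContinuousOn.intervalIntegrable
      apply ContinuousOn.inv₀
      · fun_prop
      · intro t ht
        rw [uIcc_of_le hx.1] at ht
        have : 0 < b - t := by linarith [(hsub ht).2]
        positivity
    have heval : ∫ t in θ₀..x, (L * (b - t))⁻¹ =
        L⁻¹ * (Real.log (b - θ₀) - Real.log (b - x)) := by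
      rw [intervalIntegral.integral_eq_sub_of_hasDerivAt hder hint2]
      ring
    rw [← heval]
    apply intervalIntegral.integral_mono_on hx.1 hint2 (hint θ₀ hθ₀ x hxm)
    intro t ht
    have htm := hsub ht
    have h1 : 0 < f t := hpos t htm
    have h2 : f t ≤ L * (b - t) := hub t htm
    exact inv_anti₀ h1 h2
  -- escape to -∞ near a
  have hglb : ∀ x ∈ Ioc a θ₀, g x ≤ L⁻¹ * (Real.log (x - a) - Real.log (θ₀ - a)) := by
    intro x hx
    have hxm : x ∈ Ioo a b := ⟨hx.1, lt_of_le_of_lt hx.2 hb⟩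
    have hsub : Icc x θ₀ ⊆ Ioo a b := fun t ht => ⟨lt_of_lt_of_le hx.1 ht.1, lt_of_le_of_lt ht.2 hb⟩
    have hder : ∀ t ∈ uIcc x θ₀, HasDerivAt (fun t => L⁻¹ * Real.log (t - a)) (L * (t - a))⁻¹ t := by
      intro t ht
      rw [uIcc_of_le hx.2] at ht
      have hta : 0 < t - a := by linarith [(hsub ht).1]
      have h1 : HasDerivAt (fun t : ℝ => t - a) 1 t := (hasDerivAt_id t).sub_const a
      have h2 := (Real.hasDerivAt_log hta.ne').comp t h1
      have h3 := h2.const_mul L⁻¹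
      exact h3.congr_deriv (by rw [mul_inv]; ring)
    have hint2 : IntervalIntegrable (fun t => (L * (t - a))⁻¹) volume x θ₀ := by
      apply ContinuousOn.intervalIntegrable
      apply ContinuousOn.inv₀
      · fun_prop
      · intro t ht
        rw [uIcc_of_le hx.2] at ht
        have : 0 < t - a := by linarith [(hsub ht).1]
        positivity
    have heval : ∫ t in x..θ₀, (L * (t - a))⁻¹ =
        L⁻¹ * (Real.log (θ₀ - a) - Real.log (x - a)) := by
      rw [intervalIntegral.integral_eq_sub_of_hasDerivAt hder hint2]
      ring
    have hmono2 : ∫ t in x..θ₀, (L * (t - a))⁻¹ ≤ ∫ t in x..θ₀, (f t)⁻¹ := by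
      apply intervalIntegral.integral_mono_on hx.2 hint2 (hint x hxm θ₀ hθ₀)
      intro t ht
      have htm := hsub ht
      exact inv_anti₀ (hpos t htm) (hlb t htm)
    have hsymm : g x = -∫ t in x..θ₀, (f t)⁻¹ := by
      exact intervalIntegral.integral_symm x θ₀
    rw [hsymm]
    rw [heval] at hmono2
    linarith
  -- surjectivity of g onto ℝ
  have hsurj : ∀ y : ℝ, ∃ x ∈ Ioo a b, g x = y := by
    intro y
    -- point with large g value
    obtain ⟨x₂, hx₂m, hx₂⟩ : ∃ x ∈ Ico θ₀ b, y < g x := by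
      set ε : ℝ := min (b - θ₀) (Real.exp (Real.log (b - θ₀) - L * y - 1)) with hε
      have hεpos : 0 < ε := lt_min (by linarith) (Real.exp_pos _)
      have hεle : ε ≤ b - θ₀ := min_le_left _ _
      refine ⟨b - ε, ⟨by linarith, by linarith⟩, ?_⟩
      have hlog : Real.log ε ≤ Real.log (b - θ₀) - L * y - 1 := by
        calc Real.log ε ≤ Real.log (Real.exp (Real.log (b - θ₀) - L * y - 1)) :=
          Real.log_le_log hεpos (min_le_right _ _)
        _ = _ := Real.log_exp _
      have hbnd := hgub (b - ε) ⟨by linarith, by linarith⟩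
      have hsimp : b - (b - ε) = ε := by ring
      rw [hsimp] at hbnd
      have h1 : L * y + 1 ≤ Real.log (b - θ₀) - Real.log ε := by linarith
      have h2 : L⁻¹ * (L * y + 1) ≤ L⁻¹ * (Real.log (b - θ₀) - Real.log ε) :=
        mul_le_mul_of_nonneg_left h1 (by positivity)
      have h3 : L⁻¹ * (L * y + 1) = y + L⁻¹ := by field_simp
      nlinarith [inv_pos.2 hLpos]
    obtain ⟨x₁, hx₁m, hx₁⟩ : ∃ x ∈ Ioc a θ₀, g x < y := by
      set ε : ℝ := min (θ₀ - a) (Real.exp (Real.log (θ₀ - a) + L * y - 1)) with hε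
      have hεpos : 0 < ε := lt_min (by linarith) (Real.exp_pos _)
      have hεle : ε ≤ θ₀ - a := min_le_left _ _
      refine ⟨a + ε, ⟨by linarith, by linarith⟩, ?_⟩
      have hlog : Real.log ε ≤ Real.log (θ₀ - a) + L * y - 1 := by
        calc Real.log ε ≤ Real.log (Real.exp (Real.log (θ₀ - a) + L * y - 1)) :=
          Real.log_le_log hεpos (min_le_right _ _)
        _ = _ := Real.log_exp _
      have hbnd := hglb (a + ε) ⟨by linarith, by linarith⟩
      have hsimp : a + ε - a = ε := by ring
      rw [hsimp] at hbnd
      have h1 : Real.log ε - Real.log (θ₀ - a) ≤ L * y - 1 := by linarith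
      have h2 : L⁻¹ * (Real.log ε - Real.log (θ₀ - a)) ≤ L⁻¹ * (L * y - 1) :=
        mul_le_mul_of_nonneg_left h1 (by positivity)
      have h3 : L⁻¹ * (L * y - 1) = y - L⁻¹ := by field_simp
      nlinarith [inv_pos.2 hLpos]
    have hx₁x₂ : x₁ ≤ x₂ := le_trans hx₁m.2 hx₂m.1
    have hsub : Icc x₁ x₂ ⊆ Ioo a b := fun t ht => ⟨lt_of_lt_of_le hx₁m.1 ht.1, lt_of_le_of_lt ht.2 hx₂m.2⟩
    have := intermediate_value_Icc hx₁x₂ (hgcont.mono hsub)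
    obtain ⟨x, hxmem, hgx⟩ := this ⟨hx₁.le, hx₂.le⟩
    exact ⟨x, hsub hxmem, hgx⟩
  -- the inverse function
  choose θs hθsmem hθseq using hsurj
  have hleft : ∀ x ∈ Ioo a b, θs (g x) = x := fun x hx =>
    hgmono.injOn (hθsmem (g x)) hx (hθseq (g x))
  have hθsmono : StrictMono θs := by
    intro y₁ y₂ hy
    by_contra h
    push_neg at h
    rcases h.lt_or_eq with h | h
    · have := hgmono (hθsmem y₂) (hθsmem y₁) h
      rw [hθseq, hθseq] at this
      linarith
    · have : y₂ = y₁ := by rw [← hθseq y₁, ← hθseq y₂, h]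
      linarith
  have hθscont : Continuous θs := by
    rw [continuous_iff_continuousAt]
    intro y
    apply StrictMonoOn.continuousAt_of_image_mem_nhds (hθsmono.strictMonoOn univ) Filter.univ_mem
    rw [image_univ]
    exact Filter.mem_of_superset (isOpen_Ioo.mem_nhds (hθsmem y))
      (fun x hx => ⟨g x, hleft x hx⟩)
  have hθsderiv : ∀ s, HasDerivAt θs (f (θs s)) s := by
    intro s
    have h1 : HasDerivAt g (f (θs s))⁻¹ (θs s) := hgderiv _ (hθsmem s)
    have h2 := HasDerivAt.of_local_left_inverse (hθscont.continuousAt) h1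
      (inv_ne_zero (hpos _ (hθsmem s)).ne')
      (Filter.Eventually.of_forall fun y' => hθseq y')
    rwa [inv_inv] at h2
  refine ⟨θs, ?_, hθsderiv, hθsmem⟩
  have := hleft θ₀ hθ₀
  rwa [hgzero] at this

theorem interval_around {f : ℝ → ℝ} (hcf : Continuous f) {θ₀ : ℝ} (hne : f θ₀ ≠ 0)
    (above : ∃ z, θ₀ ≤ z ∧ f z = 0) (below : ∃ z, z ≤ θ₀ ∧ f z = 0) :
    ∃ a b, a < θ₀ ∧ θ₀ < b ∧ f a = 0 ∧ f b = 0 ∧ ∀ x ∈ Ioo a b, f x ≠ 0 := by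
  obtain ⟨z₁, hz₁, hfz₁⟩ := above
  obtain ⟨z₂, hz₂, hfz₂⟩ := below
  set Sb : Set ℝ := {x | θ₀ ≤ x ∧ f x = 0} with hSb
  set Sa : Set ℝ := {x | x ≤ θ₀ ∧ f x = 0} with hSa
  have hSbc : IsClosed Sb :=
    (isClosed_le continuous_const continuous_id).inter (isClosed_eq hcf continuous_const)
  have hSac : IsClosed Sa :=
    (isClosed_le continuous_id continuous_const).inter (isClosed_eq hcf continuous_const)
  have hbmem : sInf Sb ∈ Sb := hSbc.csInf_mem ⟨z₁, hz₁, hfz₁⟩ ⟨θ₀, fun x hx => hx.1⟩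
  have hamem : sSup Sa ∈ Sa := hSac.csSup_mem ⟨z₂, hz₂, hfz₂⟩ ⟨θ₀, fun x hx => hx.1⟩
  refine ⟨sSup Sa, sInf Sb, ?_, ?_, hamem.2, hbmem.2, ?_⟩
  · rcases hamem.1.lt_or_eq with h | h
    · exact h
    · exact absurd (h ▸ hamem.2) hne
  · rcases hbmem.1.lt_or_eq with h | h
    · exact h
    · exact absurd (h.symm ▸ hbmem.2) hne
  · intro x hx hfx
    rcases le_total θ₀ x with h | h
    · exact absurd (csInf_le ⟨θ₀, fun y hy => hy.1⟩ (⟨h, hfx⟩ : x ∈ Sb)) (not_le.2 hx.2)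
    · exact absurd (le_csSup ⟨θ₀, fun y hy => hy.1⟩ (⟨h, hfx⟩ : x ∈ Sa)) (not_le.2 hx.1)

theorem sign_pos_on {f : ℝ → ℝ} (hcf : Continuous f) {a b θ₀ : ℝ} (ha : a < θ₀) (hb : θ₀ < b)
    (hne : ∀ x ∈ Ioo a b, f x ≠ 0) (h0 : 0 < f θ₀) : ∀ x ∈ Ioo a b, 0 < f x := by
  intro x hx
  by_contra h
  push_neg at h
  rcases le_total x θ₀ with hle | hle
  · obtain ⟨z, hz, hfz⟩ := zero_in hcf hle (mul_nonpos_of_nonpos_of_nonneg h h0.le)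
    exact hne z ⟨lt_of_lt_of_le hx.1 hz.1, lt_of_le_of_lt hz.2 hb⟩ hfz
  · obtain ⟨z, hz, hfz⟩ := zero_in hcf hle (mul_nonpos_of_nonneg_of_nonpos h0.le h)
    exact hne z ⟨lt_of_lt_of_le ha hz.1, lt_of_le_of_lt hz.2 hx.2⟩ hfz

theorem sign_neg_on {f : ℝ → ℝ} (hcf : Continuous f) {a b θ₀ : ℝ} (ha : a < θ₀) (hb : θ₀ < b)
    (hne : ∀ x ∈ Ioo a b, f x ≠ 0) (h0 : f θ₀ < 0) : ∀ x ∈ Ioo a b, f x < 0 := by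
  intro x hx
  by_contra h
  push_neg at h
  rcases le_total x θ₀ with hle | hle
  · obtain ⟨z, hz, hfz⟩ := zero_in hcf hle (mul_nonpos_of_nonneg_of_nonpos h h0.le)
    exact hne z ⟨lt_of_lt_of_le hx.1 hz.1, lt_of_le_of_lt hz.2 hb⟩ hfz
  · obtain ⟨z, hz, hfz⟩ := zero_in hcf hle (mul_nonpos_of_nonpos_of_nonneg h0.le h)
    exact hne z ⟨lt_of_lt_of_le ha hz.1, lt_of_le_of_lt hz.2 hx.2⟩ hfz

theorem stmt5 (lam μ θ₀ : ℝ) (f : ℝ → ℝ)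
    (hf : ∀ θ : ℝ, f θ = μ * Real.cos θ - (θ - θ₀ + lam) * Real.sin θ) :
    (∃! θ : ℝ → ℝ, θ 0 = θ₀ ∧ ∀ s : ℝ, HasDerivAt θ (f (θ s)) s) ∧
    (∀ θ : ℝ → ℝ, (θ 0 = θ₀ ∧ ∀ s : ℝ, HasDerivAt θ (f (θ s)) s) →
      (∃ M : ℝ, ∀ s : ℝ, |θ s| ≤ M) ∧
      (f θ₀ = 0 → ∀ s : ℝ, θ s = θ₀) ∧
      (0 < f θ₀ → StrictMono θ) ∧
      (f θ₀ < 0 → StrictAnti θ)) := by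
  have hfe : f = fun θ : ℝ => μ * Real.cos θ - (θ - θ₀ + lam) * Real.sin θ := funext hf
  set f' : ℝ → ℝ := fun x => μ * (-Real.sin x) - (1 * Real.sin x + (x - θ₀ + lam) * Real.cos x)
    with hf'
  have hd : ∀ x, HasDerivAt f (f' x) x := by
    intro x
    rw [hfe]
    exact ((Real.hasDerivAt_cos x).const_mul μ).sub
      ((((hasDerivAt_id x).sub_const θ₀).add_const lam).mul (Real.hasDerivAt_sin x))
  have hc' : Continuous f' := by rw [hf']; fun_prop
  have hcf : Continuous f := continuous_iff_continuousAt.2 fun x => (hd x).continuousAt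
  rcases lt_trichotomy (f θ₀) 0 with hsgn | hsgn | hsgn
  · -- f θ₀ < 0
    obtain ⟨a, b, ha, hb, hfa, hfb, hneon⟩ := interval_around hcf hsgn.ne
      (zero_above hf θ₀) (zero_below hf θ₀)
    have hnegon := sign_neg_on hcf ha hb hneon hsgn
    -- solve for -f going backwards in time
    obtain ⟨η, hη0, hηd, hηmem⟩ := exists_sol_pos (f := fun x => -(f x)) (f' := fun x => -(f' x))
      (fun x => (hd x).neg) hc'.neg ha hb (by simp [hfa]) (by simp [hfb])
      (fun x hx => by simpa using hnegon x hx)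
    set θs : ℝ → ℝ := fun s => η (-s) with hθs
    have hθs0 : θs 0 = θ₀ := by simpa [hθs] using hη0
    have hθsd : ∀ s, HasDerivAt θs (f (θs s)) s := by
      intro s
      have h1 := (hηd (-s)).comp s ((hasDerivAt_id s).neg)
      simpa [hθs, Function.comp_def] using h1
    have hθsmem : ∀ s, θs s ∈ Ioo a b := fun s => hηmem (-s)
    have huniq : ∀ θ : ℝ → ℝ, (θ 0 = θ₀ ∧ ∀ s : ℝ, HasDerivAt θ (f (θ s)) s) → θ = θs := by
      intro θ ⟨h0, hds⟩
      have htrap : ∀ s, θ s ∈ Icc a b := fun s =>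
        ⟨(trap_above hd hc' hds hfa (h0.symm ▸ ha) s).le,
         (trap_below hd hc' hds hfb (h0.symm ▸ hb) s).le⟩
      exact sol_unique hd hc' hds hθsd htrap (fun s => Ioo_subset_Icc_self (hθsmem s))
        (by rw [h0, hθs0])
    refine ⟨⟨θs, ⟨hθs0, hθsd⟩, huniq⟩, ?_⟩
    intro θ hθ
    have hθeq := huniq θ hθ
    subst hθeq
    refine ⟨⟨max |a| |b|, fun s => ?_⟩, fun h => absurd h (by linarith), fun h => absurd h (by linarith), fun _ => ?_⟩
    · have hm := hθsmem s
      have := neg_abs_le a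
      have := le_abs_self b
      rw [abs_le]
      constructor
      · have := le_max_left |a| |b|; linarith [hm.1]
      · have := le_max_right |a| |b|; linarith [hm.2]
    · apply strictAnti_of_deriv_neg
      intro s
      rw [(hθsd s).deriv]
      exact hnegon _ (hθsmem s)
  · -- f θ₀ = 0
    have hconst : ∀ θ : ℝ → ℝ, (θ 0 = θ₀ ∧ ∀ s : ℝ, HasDerivAt θ (f (θ s)) s) →
        ∀ s, θ s = θ₀ := fun θ hθ => const_of_hits hd hc' hθ.2 hsgn hθ.1
    refine ⟨⟨fun _ => θ₀, ⟨rfl, fun s => by simpa [hsgn] using hasDerivAt_const s θ₀⟩,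
      fun θ hθ => funext (hconst θ hθ)⟩, ?_⟩
    intro θ hθ
    refine ⟨⟨|θ₀|, fun s => by rw [hconst θ hθ s]⟩, fun _ => hconst θ hθ,
      fun h => absurd h (by linarith), fun h => absurd h (by linarith)⟩
  · -- 0 < f θ₀
    obtain ⟨a, b, ha, hb, hfa, hfb, hneon⟩ := interval_around hcf hsgn.ne'
      (zero_above hf θ₀) (zero_below hf θ₀)
    have hposon := sign_pos_on hcf ha hb hneon hsgn
    obtain ⟨θs, hθs0, hθsd, hθsmem⟩ := exists_sol_pos hd hc' ha hb hfa hfb hposon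
    have huniq : ∀ θ : ℝ → ℝ, (θ 0 = θ₀ ∧ ∀ s : ℝ, HasDerivAt θ (f (θ s)) s) → θ = θs := by
      intro θ ⟨h0, hds⟩
      have htrap : ∀ s, θ s ∈ Icc a b := fun s =>
        ⟨(trap_above hd hc' hds hfa (h0.symm ▸ ha) s).le,
         (trap_below hd hc' hds hfb (h0.symm ▸ hb) s).le⟩
      exact sol_unique hd hc' hds hθsd htrap (fun s => Ioo_subset_Icc_self (hθsmem s))
        (by rw [h0, hθs0])
    refine ⟨⟨θs, ⟨hθs0, hθsd⟩, huniq⟩, ?_⟩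
    intro θ hθ
    have hθeq := huniq θ hθ
    subst hθeq
    refine ⟨⟨max |a| |b|, fun s => ?_⟩, fun h => absurd h (by linarith), fun _ => ?_, fun h => absurd h (by linarith)⟩
    · have hm := hθsmem s
      have := neg_abs_le a
      have := le_abs_self b
      rw [abs_le]
      constructor
      · have := le_max_left |a| |b|; linarith [hm.1]
      · have := le_max_right |a| |b|; linarith [hm.2]
    · apply strictMono_of_deriv_pos
      intro s
      rw [(hθsd s).deriv]
      exact hposon _ (hθsmem s)
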